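/- Let H be a Hilbert space and φ a bounded finite potent endomorphism of H with core-nilpotent decomposition φ = φ₁ + φ₂. Then φ₁ is bounded (and hence a bounded finite rank operator on H). -/

import Mathlib

/-- The core part `φ₁` of a bounded finite potent endomorphism `φ` (equal to `φ` on
`W_φ` and `0` on `U_φ`) is a bounded finite rank operator. -/
theorem core_part_bounded_finite_rank {H : Type*} [NormedAddCommGroup H]
    [InnerProductSpace ℂ H] [CompleteSpace H]
    (φ : H →ₗ[ℂ] H) (hb : Continuous ⇑φ)
    (hfp : ∃ n : ℕ, FiniteDimensional ℂ (LinearMap.range (φ ^ n)))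
    (W U : Submodule ℂ H) (hWU : IsCompl W U) [FiniteDimensional ℂ W]
    (hW : ∀ x ∈ W, φ x ∈ W) (hU : ∀ x ∈ U, φ x ∈ U)
    (hWa : Function.Bijective (φ.restrict hW))
    (hUn : IsNilpotent (φ.restrict hU))
    (φ₁ : H →ₗ[ℂ] H) (hφ₁W : ∀ v ∈ W, φ₁ v = φ v) (hφ₁U : ∀ v ∈ U, φ₁ v = 0) :
    Continuous ⇑φ₁ ∧ FiniteDimensional ℂ (LinearMap.range φ₁) := by
  obtain ⟨n, hn⟩ := hUn
  -- φ^n is continuous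
  have hφn' : ∀ m : ℕ, Continuous ⇑(φ ^ m) := by
    intro m
    induction m with
    | zero => simpa [Module.End.coe_one] using continuous_id
    | succ k ih => simpa [pow_succ, Module.End.mul_eq_comp, LinearMap.coe_comp] using ih.comp hb
  have hφn : Continuous ⇑(φ ^ n) := hφn' n
  -- φ^n vanishes on U
  have hφnU : ∀ x ∈ U, (φ ^ n) x = 0 := by
    intro x hx
    have := congrArg (fun f => (f ⟨x, hx⟩ : H)) ((Module.End.pow_restrict n hU).symm.trans hn)
    simpa [LinearMap.restrict_apply] using this
  -- φ^n restricted to W is injective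
  have hφnW : ∀ w : W, (φ ^ n) (w : H) = 0 → w = 0 := by
    intro w hw
    have h1 : ((φ.restrict hW) ^ n) w = 0 := by
      rw [Module.End.pow_restrict n hW]
      exact Subtype.ext (by simpa [LinearMap.restrict_apply] using hw)
    have hbij' : ∀ m : ℕ, Function.Bijective ((φ.restrict hW) ^ m) := by
      intro m
      induction m with
      | zero => simpa [Module.End.coe_one] using Function.bijective_id
      | succ k ih => simpa [pow_succ, Module.End.mul_eq_comp, LinearMap.coe_comp] using Function.Bijective.comp ih hWa
    have hbij := hbij' n
    exact hbij.injective (by simpa using h1)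
  -- U is the kernel of φ^n, hence closed
  have hUker : U = LinearMap.ker (φ ^ n) := by
    apply le_antisymm
    · intro x hx; exact hφnU x hx
    · intro x hx
      obtain ⟨w, u, hw, hu, hx'⟩ := Submodule.codisjoint_iff_exists_add_eq.mp hWU.codisjoint x
      have : (φ ^ n) w + (φ ^ n) u = 0 := by
        rw [← map_add, hx']; exact hx
      rw [hφnU u hu, add_zero] at this
      have hw0 : (⟨w, hw⟩ : W) = 0 := hφnW ⟨w, hw⟩ this
      have : w = 0 := congrArg Subtype.val hw0
      rw [← hx', this, zero_add]; exact hu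
  have hUclosed : IsClosed (U : Set H) := by
    rw [hUker]
    have : (↑(LinearMap.ker (φ ^ n)) : Set H) = ⇑(φ ^ n) ⁻¹' {0} := by
      ext x; simp [LinearMap.mem_ker]
    rw [this]
    exact isClosed_singleton.preimage hφn
  haveI : IsClosed (U : Set H) := hUclosed
  -- the quotient H ⧸ U is finite dimensional (isomorphic to W)
  haveI : FiniteDimensional ℂ (H ⧸ U) :=
    LinearEquiv.finiteDimensional (Submodule.quotientEquivOfIsCompl U W hWU.symm).symm
  -- φ₁ vanishes on U, so it factors through the quotient
  have hker : U ≤ LinearMap.ker φ₁ := fun x hx => by simpa [LinearMap.mem_ker] using hφ₁U x hx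
  have hfact : ⇑φ₁ = ⇑(U.liftQ φ₁ hker) ∘ ⇑U.mkQ := by
    ext x
    simp [Submodule.liftQ_apply]
  have hcont : Continuous ⇑φ₁ := by
    rw [hfact]
    exact (LinearMap.continuous_of_finiteDimensional (U.liftQ φ₁ hker)).comp continuous_quot_mk
  refine ⟨hcont, ?_⟩
  -- the range of φ₁ is contained in W
  have hrange : LinearMap.range φ₁ ≤ W := by
    rintro _ ⟨x, rfl⟩
    obtain ⟨w, u, hw, hu, hx'⟩ := Submodule.codisjoint_iff_exists_add_eq.mp hWU.codisjoint x
    rw [← hx', map_add, hφ₁U u hu, add_zero, hφ₁W w hw]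
    exact hW w hw
  exact Submodule.finiteDimensional_of_le hrange
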